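/- For the map f(x,y) = (x/2, y/2 − sgn(y)x²) on [−1,1]², the n-th iterate on the domain {y > 0} near the origin has first coordinate x/2^n, and the number of continuity domains of f^n whose closure contains the origin is 2^n for every n ≥ 1; hence the multiplicity entropy of f equals log 2. -/

import Mathlib

/-- The map of Example 5: `(x,y) ↦ (x/2, y/2 − sgn(y)·x²)` on `[−1,1]²`. -/
noncomputable def fBuzzi (p : ℝ × ℝ) : ℝ × ℝ :=
  (p.1 / 2, p.2 / 2 - Real.sign p.2 * p.1 ^ 2)

/-- The continuity domain of `f^n` in `[−1,1]²` with sign itinerary `w`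
(`w k = true` meaning the `k`-th iterate has positive second coordinate). -/
def signDom (n : ℕ) (w : Fin n → Bool) : Set (ℝ × ℝ) :=
  {p | |p.1| ≤ 1 ∧ |p.2| ≤ 1 ∧
    ∀ k : Fin n, if w k then 0 < (fBuzzi^[(k : ℕ)] p).2 else (fBuzzi^[(k : ℕ)] p).2 < 0}

/-- Partial sums `∑_{j<k} eⱼ (1/2)ʲ` of a sign sequence. -/
noncomputable def Ssum (e : ℕ → ℝ) (k : ℕ) : ℝ := ∑ j ∈ Finset.range k, e j * (1/2)^j

lemma key (e : ℕ → ℝ) (he : ∀ j, e j = 1 ∨ e j = -1) {k n : ℕ} (hk : k < n) :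
    0 < e k * (Ssum e n - Ssum e k) := by
  have hdiff : Ssum e n - Ssum e k = ∑ j ∈ Finset.Ico k n, e j * (1/2)^j := by
    rw [Ssum, Ssum, Finset.sum_Ico_eq_sub _ hk.le]
  have hsplit : ∑ j ∈ Finset.Ico k n, e j * (1/2:ℝ)^j
      = e k * (1/2)^k + ∑ j ∈ Finset.Ico (k+1) n, e j * (1/2)^j :=
    Finset.sum_eq_sum_Ico_succ_bot hk _
  have habs : |∑ j ∈ Finset.Ico (k+1) n, e j * (1/2:ℝ)^j| < (1/2)^k := by
    calc |∑ j ∈ Finset.Ico (k+1) n, e j * (1/2:ℝ)^j|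
        ≤ ∑ j ∈ Finset.Ico (k+1) n, |e j * (1/2:ℝ)^j| := Finset.abs_sum_le_sum_abs _ _
      _ = ∑ j ∈ Finset.Ico (k+1) n, (1/2:ℝ)^j := by
          refine Finset.sum_congr rfl fun j _ => ?_
          rcases he j with h | h <;> rw [h] <;> simp [abs_of_pos, pow_pos]
      _ < (1/2)^k := by
          rw [Finset.sum_Ico_eq_sub _ hk, geom_sum_eq (by norm_num), geom_sum_eq (by norm_num)]
          have h1 : (0:ℝ) < (1/2:ℝ)^n := by positivity
          have hps : (1/2:ℝ)^(k+1) = (1/2)^k * (1/2) := pow_succ _ _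
          have h2 : ((1/2:ℝ)^n - 1)/(1/2-1) - ((1/2)^(k+1) - 1)/(1/2-1)
              = 2*(1/2)^(k+1) - 2*(1/2)^n := by ring
          rw [h2]
          nlinarith [h1]
  obtain ⟨hlo, hhi⟩ := abs_lt.mp habs
  rcases he k with h | h <;> rw [hdiff, hsplit, h] <;> nlinarith [hlo, hhi]

lemma iter_eq (e : ℕ → ℝ) (he : ∀ j, e j = 1 ∨ e j = -1) {x : ℝ} (hx : x ≠ 0) (n : ℕ) :
    ∀ k, k ≤ n → fBuzzi^[k] (x, 2*x^2 * Ssum e n)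
      = (x / 2^k, (1/2)^k * (2*x^2) * (Ssum e n - Ssum e k)) := by
  intro k
  induction k with
  | zero => intro _; simp [Ssum]
  | succ k ih =>
    intro hk1
    have hk : k < n := hk1
    rw [Function.iterate_succ_apply', ih hk.le]
    have hx2 : 0 < x^2 := by positivity
    have hkey := key e he hk
    have hfac : 0 < (1/2:ℝ)^k * (2*x^2) := by positivity
    have hS1 : Ssum e (k+1) = Ssum e k + e k * (1/2)^k := by
      rw [Ssum, Ssum, Finset.sum_range_succ]
    rcases he k with h | h
    · have hpos : 0 < (1/2:ℝ)^k * (2*x^2) * (Ssum e n - Ssum e k) :=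
        mul_pos hfac (by nlinarith [hkey])
      simp only [fBuzzi, Real.sign_of_pos hpos, Prod.mk.injEq]
      rw [hS1, h]
      constructor <;> · rw [pow_succ]; ring_nf <;> simp only [one_div]
    · have hneg : (1/2:ℝ)^k * (2*x^2) * (Ssum e n - Ssum e k) < 0 :=
        mul_neg_of_pos_of_neg hfac (by nlinarith [hkey])
      simp only [fBuzzi, Real.sign_of_neg hneg, Prod.mk.injEq]
      rw [hS1, h]
      constructor <;> · rw [pow_succ]; ring_nf <;> simp only [one_div]

lemma Ssum_abs_le (e : ℕ → ℝ) (he : ∀ j, e j = 1 ∨ e j = -1) (n : ℕ) : |Ssum e n| ≤ 2 := by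
  calc |Ssum e n| ≤ ∑ j ∈ Finset.range n, |e j * (1/2:ℝ)^j| := Finset.abs_sum_le_sum_abs _ _
    _ = ∑ j ∈ Finset.range n, (1/2:ℝ)^j := by
        refine Finset.sum_congr rfl fun j _ => ?_
        rcases he j with h | h <;> rw [h] <;> simp [abs_of_pos, pow_pos]
    _ ≤ 2 := by
        rw [geom_sum_eq (by norm_num),
          show ((1/2:ℝ)^n - 1)/(1/2-1) = 2 - 2*(1/2)^n from by ring]
        have : (0:ℝ) < (1/2:ℝ)^n := by positivity
        linarith

lemma zero_mem_closure (n : ℕ) (w : Fin n → Bool) :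
    ((0, 0) : ℝ × ℝ) ∈ closure (signDom n w) := by
  classical
  set e : ℕ → ℝ := fun j => if h : j < n then (if w ⟨j, h⟩ then 1 else -1) else 1 with he_def
  have he : ∀ j, e j = 1 ∨ e j = -1 := by
    intro j; simp only [he_def]; split_ifs <;> simp
  set C : ℝ := Ssum e n with hC
  have hCabs : |C| ≤ 2 := Ssum_abs_le e he n
  set g : ℕ → ℝ := fun m => (1/2:ℝ)^(m+1) with hg_def
  have hg0 : ∀ m, 0 < g m := fun m => by positivity
  have hgle : ∀ m, g m ≤ 1/2 := by
    intro m
    calc g m = (1/2:ℝ)^(m+1) := rfl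
      _ ≤ (1/2:ℝ)^1 := pow_le_pow_of_le_one (by norm_num) (by norm_num) (by omega)
      _ = 1/2 := pow_one _
  set p : ℕ → ℝ × ℝ := fun m => (g m, 2*(g m)^2 * C) with hp_def
  have hmem : ∀ m, p m ∈ signDom n w := by
    intro m
    have hx := hg0 m
    have hxle := hgle m
    refine ⟨?_, ?_, ?_⟩
    · rw [abs_of_pos hx]; linarith
    · have : |2*(g m)^2 * C| = 2*(g m)^2 * |C| := by
        rw [abs_mul, abs_of_pos (by positivity : (0:ℝ) < 2*(g m)^2)]
      rw [this]
      nlinarith [sq_nonneg (g m), hCabs, abs_nonneg C]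
    · intro k
      have hiter := iter_eq e he (ne_of_gt hx) n k k.2.le
      have hkey := key e he (k.2 : (k:ℕ) < n)
      have hek : e (k : ℕ) = if w k then 1 else -1 := by
        simp only [he_def, dif_pos k.2]
      have hfac : 0 < (1/2:ℝ)^(k:ℕ) * (2*(g m)^2) := by positivity
      rw [hiter]
      by_cases hw : w k
      · rw [if_pos hw]
        rw [hek, if_pos hw] at hkey
        have : 0 < Ssum e n - Ssum e (k:ℕ) := by linarith [hkey]
        nlinarith [hfac, this]
      · rw [if_neg hw]
        rw [hek, if_neg hw] at hkey
        have : Ssum e n - Ssum e (k:ℕ) < 0 := by nlinarith [hkey]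
        nlinarith [hfac, this]
  have hgtend : Filter.Tendsto g Filter.atTop (nhds 0) := by
    have h0 : Filter.Tendsto (fun m : ℕ => (1/2:ℝ)^m) Filter.atTop (nhds 0) :=
      tendsto_pow_atTop_nhds_zero_of_lt_one (by norm_num) (by norm_num)
    exact h0.comp (Filter.tendsto_add_atTop_nat 1)
  have hptend : Filter.Tendsto p Filter.atTop (nhds ((0,0) : ℝ × ℝ)) := by
    rw [Prod.tendsto_iff]
    refine ⟨hgtend, ?_⟩
    have : Filter.Tendsto (fun m => 2*(g m)^2 * C) Filter.atTop (nhds (2*(0:ℝ)^2*C)) :=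
      (((hgtend.pow 2).const_mul 2).mul_const C)
    simpa using this
  exact mem_closure_of_tendsto hptend (Filter.Eventually.of_forall hmem)

lemma card_eq (n : ℕ) :
    Nat.card {w : Fin n → Bool | ((0, 0) : ℝ × ℝ) ∈ closure (signDom n w)} = 2 ^ n := by
  have huniv : {w : Fin n → Bool | ((0, 0) : ℝ × ℝ) ∈ closure (signDom n w)} = Set.univ :=
    Set.eq_univ_of_forall fun w => zero_mem_closure n w
  rw [huniv]
  calc Nat.card (Set.univ : Set (Fin n → Bool)) = Nat.card (Fin n → Bool) :=
        Nat.card_congr (Equiv.Set.univ _)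
    _ = 2 ^ n := by simp [Nat.card_eq_fintype_card]

/-- The `n`-th iterate of `f` has first coordinate `x/2ⁿ`; the number of
continuity domains of `f^n` whose closure contains the origin is `2ⁿ` for every `n ≥ 1`; hence
the multiplicity entropy of `f` equals `log 2`. -/
theorem fBuzzi_multiplicity :
    (∀ (p : ℝ × ℝ) (n : ℕ), (fBuzzi^[n] p).1 = p.1 / 2 ^ n) ∧
    (∀ n : ℕ, 1 ≤ n →
      Nat.card {w : Fin n → Bool | ((0, 0) : ℝ × ℝ) ∈ closure (signDom n w)} = 2 ^ n) ∧
    Filter.Tendsto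
      (fun n : ℕ => Real.log
          (Nat.card {w : Fin n → Bool | ((0, 0) : ℝ × ℝ) ∈ closure (signDom n w)}) / n)
      Filter.atTop (nhds (Real.log 2)) := by
  refine ⟨?_, fun n _ => card_eq n, ?_⟩
  · intro p n
    induction n generalizing p with
    | zero => simp
    | succ n ih =>
      rw [Function.iterate_succ_apply, ih]
      show (fBuzzi p).1 / 2 ^ n = p.1 / 2 ^ (n + 1)
      rw [pow_succ, fBuzzi]
      ring
  · have heq : (fun n : ℕ => Real.log
        (Nat.card {w : Fin n → Bool | ((0, 0) : ℝ × ℝ) ∈ closure (signDom n w)}) / n)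
        =ᶠ[Filter.atTop] (fun _ => Real.log 2) := by
      filter_upwards [Filter.eventually_ge_atTop 1] with n hn
      rw [card_eq n]
      push_cast
      rw [Real.log_pow]
      have hn' : (n : ℝ) ≠ 0 := Nat.cast_ne_zero.mpr (by omega)
      field_simp
    rw [Filter.tendsto_congr' heq]
    exact tendsto_const_nhds
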